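/- Let K/k be a field extension of characteristic p > 0. Any two r-bases of K/k have the same cardinality. -/

import Mathlib

/-!
Common definitions: purely inseparable extension theory (r-bases, degree of
irrationality, relative perfect closure, modularity), following Fliouet,
"Extensions absolument lq-finies".
-/

open IntermediateField

noncomputable section

/-- `k(K^p)`: the intermediate field of `K/k` generated by the `p`-th powers of `K`. -/
def pClosure (k K : Type*) [Field k] [Field K] [Algebra k K] (p : ℕ) : IntermediateField k K :=
  adjoin k {x : K | ∃ y : K, y ^ p = x}

/-- `k(K^{p^n})`. -/
def pnClosure (k K : Type*) [Field k] [Field K] [Algebra k K] (p n : ℕ) : IntermediateField k K :=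
  adjoin k {x : K | ∃ y : K, y ^ p ^ n = x}

/-- `k(L^p)` for an intermediate field `L` of `Ω/k`. -/
def pClosureOf {k Ω : Type*} [Field k] [Field Ω] [Algebra k Ω] (p : ℕ)
    (L : IntermediateField k Ω) : IntermediateField k Ω :=
  adjoin k {x : Ω | ∃ y ∈ L, y ^ p = x}

/-- `B` is `r`-free over the intermediate field `L` (typically `L = k(K^p)`):
no `x ∈ B` belongs to `L(B \ {x})`. -/
def RFreeOver {k K : Type*} [Field k] [Field K] [Algebra k K]
    (L : IntermediateField k K) (B : Set K) : Prop :=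
  ∀ x ∈ B, x ∉ adjoin L (B \ {x})

/-- `B` is an `r`-basis of `K/k` : `K = k(K^p)(B)` and `B` is `r`-free over `k(K^p)`. -/
def RBasis (k K : Type*) [Field k] [Field K] [Algebra k K] (p : ℕ) (B : Set K) : Prop :=
  adjoin (pClosure k K p) B = ⊤ ∧ RFreeOver (pClosure k K p) B

/-- `B` is an `r`-basis of `L/F` where `F ≤ L` are intermediate fields of `Ω/k`:
`L = F(L^p)(B)` and no `x ∈ B` lies in `F(L^p)(B \ {x})`. -/
def RBasisRel {k Ω : Type*} [Field k] [Field Ω] [Algebra k Ω] (p : ℕ)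
    (F L : IntermediateField k Ω) (B : Set Ω) : Prop :=
  B ⊆ (L : Set Ω) ∧ F ⊔ pClosureOf p L ⊔ adjoin k B = L ∧
    ∀ x ∈ B, x ∉ F ⊔ pClosureOf p L ⊔ adjoin k (B \ {x})

/-- The degree of irrationality of a bounded-exponent extension:
the cardinality of an `r`-basis of `K/k`. -/
def diCard (k K : Type*) [Field k] [Field K] [Algebra k K] (p : ℕ) : Cardinal :=
  sInf {c : Cardinal | ∃ B : Set K, RBasis k K p B ∧ Cardinal.mk B = c}

/-- `k^{p^{-n}} ∩ K = {x ∈ K | x^{p^n} ∈ k}`. -/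
def expleq (k K : Type*) [Field k] [Field K] [Algebra k K] (p n : ℕ) : IntermediateField k K :=
  adjoin k {x : K | x ^ p ^ n ∈ (algebraMap k K).range}

/-- The degree of irrationality `di(K/k) = sup_n di(k^{p^{-n}} ∩ K / k)`. -/
def di (k K : Type*) [Field k] [Field K] [Algebra k K] (p : ℕ) : Cardinal :=
  ⨆ n : ℕ, diCard k (expleq k K p n) p

/-- The relative perfect closure `rp(K/k)`: the largest intermediate field `L`
with `k(L^p) = L`. -/
def rp (k K : Type*) [Field k] [Field K] [Algebra k K] (p : ℕ) : IntermediateField k K :=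
  sSup {L : IntermediateField k K | pClosureOf p L = L}

/-- `K/k` has unbounded exponent. -/
def UnboundedExp (k K : Type*) [Field k] [Field K] [Algebra k K] (p : ℕ) : Prop :=
  ∀ e : ℕ, ∃ x : K, x ^ p ^ e ∉ (algebraMap k K).range

/-- `K^{p^n}` as a subfield of `K`. -/
def pnPowers (K : Type*) [Field K] (p n : ℕ) : Subfield K :=
  Subfield.closure {x : K | ∃ y : K, y ^ p ^ n = x}

/-- `K/k` is modular: for each `n`, `K^{p^n}` and `k` are linearly disjoint over
`K^{p^n} ∩ k`, i.e. every finite family of elements of `K^{p^n}` that is linearly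
independent over `K^{p^n} ∩ k` remains linearly independent over `k`. -/
def Modular (k K : Type*) [Field k] [Field K] [Algebra k K] (p : ℕ) : Prop :=
  ∀ n : ℕ, ∀ s : Finset K, (↑s : Set K) ⊆ (pnPowers K p n : Set K) →
    LinearIndependent ↥(pnPowers K p n ⊓ (algebraMap k K).fieldRange)
      (fun x : s => (x : K)) →
    LinearIndependent ↥((algebraMap k K).fieldRange) (fun x : s => (x : K))

/-- The exponent `o(a, F)` of `a` over an intermediate field `F`:
the least `m` with `a^{p^m} ∈ F`. -/
def expOf {k K : Type*} [Field k] [Field K] [Algebra k K] (p : ℕ)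
    (F : IntermediateField k K) (a : K) : ℕ :=
  sInf {m : ℕ | a ^ p ^ m ∈ F}

/-- An intermediate field `L` of `K/k` is equiexponential of exponent `e` over `k`:
there is an `r`-basis `G` of `L/k` with `o(a, k(G \ {a})) = o(a, k) = e` for all `a ∈ G`. -/
def EquiExpOf {k K : Type*} [Field k] [Field K] [Algebra k K] (p : ℕ)
    (e : ℕ) (L : IntermediateField k K) : Prop :=
  ∃ G : Set K, RBasisRel p ⊥ L G ∧
    ∀ a ∈ G, expOf p (adjoin k (G \ {a})) a = e ∧ expOf p (⊥ : IntermediateField k K) a = e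

end


section AuxPB

open Polynomial

section PB

variable {p : ℕ} [Fact p.Prime] {F K : Type*} [Field F] [Field K] [Algebra F K] [CharP K p]

theorem pb_isIntegral {E : IntermediateField F K} {b : K} (hbp : b ^ p ∈ E) :
    IsIntegral E b := by
  refine ⟨X ^ p - C ⟨b ^ p, hbp⟩, monic_X_pow_sub_C _ (Fact.out : p.Prime).ne_zero, ?_⟩
  simp [eval₂_sub, eval₂_pow]

theorem pb_minpoly_natDegree {E : IntermediateField F K} {b : K} (hbp : b ^ p ∈ E)
    (hb : b ∉ E) : (minpoly E b).natDegree = p := by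
  have hint : IsIntegral E b := pb_isIntegral hbp
  have hdvd : minpoly E b ∣ X ^ p - C ⟨b ^ p, hbp⟩ := by
    apply minpoly.dvd
    simp [aeval_def, eval₂_sub, eval₂_pow]
  have hmap : (minpoly E b).map (algebraMap E K) ∣ (X - C b) ^ p := by
    have := Polynomial.map_dvd (algebraMap E K) hdvd
    rw [show (X - C b) ^ p = X ^ p - C b ^ p from sub_pow_char _ _, ← C_pow]
    convert this using 1
    rw [Polynomial.map_sub, Polynomial.map_pow, map_X, map_C]
    rfl
  obtain ⟨i, hip, hassoc⟩ := (dvd_prime_pow (prime_X_sub_C b) p).mp hmap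
  have heq : (minpoly E b).map (algebraMap E K) = (X - C b) ^ i :=
    eq_of_monic_of_associated ((minpoly.monic hint).map _) ((monic_X_sub_C b).pow i) hassoc
  have hdeg : (minpoly E b).natDegree = i := by
    have := congrArg natDegree heq
    rwa [natDegree_map, natDegree_pow, natDegree_X_sub_C, mul_one] at this
  rw [hdeg]
  rcases Nat.lt_or_ge i p with h | h
  · exfalso
    -- nextCoeff argument
    have hnc : ((minpoly E b).map (algebraMap E K)).nextCoeff =
        algebraMap E K (minpoly E b).nextCoeff :=
      nextCoeff_map (algebraMap E K).injective _
    have hi0 : i ≠ 0 := by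
      rintro rfl
      have : (minpoly E b).natDegree = 0 := hdeg
      have := minpoly.natDegree_pos hint
      omega
    have hnc2 : ((X - C b) ^ i).nextCoeff = i • (-b) := by
      rw [(monic_X_sub_C b).nextCoeff_pow, nextCoeff_X_sub_C]
    have key : (i : K) * (-b) ∈ E := by
      have : algebraMap E K (minpoly E b).nextCoeff = (i : K) * (-b) := by
        rw [← hnc, heq, hnc2, nsmul_eq_mul]
      rw [← this]
      exact (minpoly E b).nextCoeff.2
    have hipne : (i : K) ≠ 0 := by
      rw [Ne, CharP.cast_eq_zero_iff K p]
      intro hdvd'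
      rcases hdvd' with ⟨c, rfl⟩
      rcases Nat.eq_zero_or_pos c with rfl | hc
      · simp at hi0
      · nlinarith [(Fact.out : p.Prime).two_le]
    apply hb
    have hmem : (i : K) ∈ E := by exact_mod_cast E.natCast_mem i
    have := E.mul_mem (E.inv_mem hmem) key
    rw [inv_mul_cancel_left₀ hipne] at this
    simpa using E.neg_mem this
  · omega

end PB

section PB2
variable {p : ℕ} [Fact p.Prime] {F K : Type*} [Field F] [Field K] [Algebra F K] [CharP K p]

theorem pb_powers_li {E : IntermediateField F K} {b : K} (hbp : b ^ p ∈ E)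
    (hb : b ∉ E) : LinearIndependent E (fun j : Fin p => b ^ (j : ℕ)) := by
  have hint : IsIntegral E b := pb_isIntegral hbp
  have hdeg : (minpoly E b).natDegree = p := pb_minpoly_natDegree hbp hb
  rw [Fintype.linearIndependent_iff]
  intro g hsum
  by_contra hne
  push_neg at hne
  obtain ⟨j₀, hj₀⟩ := hne
  set q : Polynomial E := ∑ j : Fin p, C (g j) * X ^ (j : ℕ) with hq
  have hcoeff : ∀ m : ℕ, q.coeff m = if h : m < p then g ⟨m, h⟩ else 0 := by
    intro m
    rw [hq, finset_sum_coeff]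
    simp only [coeff_C_mul, coeff_X_pow]
    split_ifs with h
    · rw [Finset.sum_eq_single (⟨m, h⟩ : Fin p)]
      · simp
      · intro j _ hj
        simp only [mul_ite, mul_one, mul_zero, ite_eq_right_iff]
        intro hjm
        exact absurd (Fin.ext hjm.symm) hj
      · simp
    · apply Finset.sum_eq_zero
      intro j _
      simp only [mul_ite, mul_one, mul_zero, ite_eq_right_iff]
      intro hjm
      exact absurd (hjm ▸ j.isLt) h -- check
  have hqne : q ≠ 0 := by
    intro h0
    apply hj₀
    have := hcoeff j₀
    rw [h0, coeff_zero] at this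
    simpa [j₀.isLt] using this.symm
  have haev : aeval b q = 0 := by
    rw [hq, map_sum]
    rw [← hsum]
    apply Finset.sum_congr rfl
    intro j _
    rw [map_mul, aeval_C, map_pow, aeval_X, Algebra.smul_def]
  have hle := minpoly.degree_le_of_ne_zero E b hqne haev
  have hqlt : q.degree < (p : ℕ) := by
    rw [degree_lt_iff_coeff_zero]
    intro m hm
    rw [hcoeff m]
    have hm' : p ≤ m := by exact_mod_cast hm
    simp [Nat.not_lt.mpr hm']
  have hmind : (minpoly E b).degree = (p : ℕ) := by
    rw [degree_eq_natDegree (minpoly.ne_zero hint), hdeg]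
  rw [hmind] at hle
  exact absurd (lt_of_le_of_lt hle hqlt) (lt_irrefl _)

end PB2

instance factPrime_neZero {p : ℕ} [hp : Fact p.Prime] : NeZero p := ⟨hp.out.ne_zero⟩

section PB3
variable {p : ℕ} [Fact p.Prime] {F K : Type*} [Field F] [Field K] [Algebra F K] [CharP K p]

noncomputable def pMono (p : ℕ) [NeZero p] {K : Type*} [Field K] (B : Set K) (f : ↥B →₀ Fin p) : K :=
  f.prod fun b e => (b : K) ^ (e : ℕ)

theorem pMono_zero (B : Set K) : pMono p B (0 : ↥B →₀ Fin p) = 1 := by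
  rw [pMono, Finsupp.prod_zero_index]

theorem pMono_erase (B : Set K) (b : ↥B) (f : ↥B →₀ Fin p) :
    pMono p B f = pMono p B (f.erase b) * (b : K) ^ ((f b : Fin p) : ℕ) := by
  classical
  conv_lhs => rw [← Finsupp.erase_add_single b f]
  rw [pMono, Finsupp.prod_add_index_of_disjoint, ← pMono]
  · congr 1
    rw [Finsupp.prod_single_index]
    simp
  · rw [Finsupp.support_erase]
    intro s hs1 hs2 x hx
    have h1 := hs1 hx
    have h2 := hs2 hx
    simp only [Finset.mem_erase] at h1
    have := Finsupp.support_single_subset h2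
    simp only [Finset.mem_singleton] at this
    exact absurd this h1.1

theorem pMono_mem_adjoin (B : Set K) (S : Set K) (f : ↥B →₀ Fin p)
    (h : ∀ b ∈ f.support, (b : K) ∈ S) : pMono p B f ∈ adjoin F S := by
  apply Subfield.prod_mem
  intro b hb
  exact pow_mem (subset_adjoin F S (h b hb)) _

end PB3

section PB4
variable {p : ℕ} [Fact p.Prime] {F K : Type*} [Field F] [Field K] [Algebra F K] [CharP K p]

theorem pMono_li (B : Set K) (hpow : ∀ x : K, x ^ p ∈ (algebraMap F K).range)
    (hfree : ∀ x ∈ B, x ∉ adjoin F (B \ {x})) :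
    LinearIndependent F (pMono p B) := by
  classical
  have claim : ∀ s : Finset ↥B, ∀ t : Finset (↥B →₀ Fin p), (∀ f ∈ t, f.support ⊆ s) →
      ∀ g : (↥B →₀ Fin p) → F, ∑ f ∈ t, g f • pMono p B f = 0 → ∀ f ∈ t, g f = 0 := by
    intro s
    induction s using Finset.induction_on with
    | empty =>
      intro t ht g hsum f hf
      have hf0 : f = 0 := Finsupp.support_eq_empty.mp (Finset.subset_empty.mp (ht f hf))
      have htsub : t ⊆ {0} := by
        intro f' hf'
        rw [Finset.mem_singleton]
        exact Finsupp.support_eq_empty.mp (Finset.subset_empty.mp (ht f' hf'))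
      rcases Finset.subset_singleton_iff.mp htsub with rfl | rfl
      · exact absurd hf (Finset.notMem_empty f)
      · rw [Finset.sum_singleton, pMono_zero] at hsum
        rcases smul_eq_zero.mp hsum with h | h
        · rwa [hf0]
        · exact absurd h one_ne_zero
    | @insert b s' hbs ih =>
      intro t ht g hsum f₀ hf₀
      set E := adjoin F (B \ {(b : K)}) with hE
      have hbE : (b : K) ∉ E := hfree b b.2
      have hbpE : (b : K) ^ p ∈ E := by
        obtain ⟨c, hc⟩ := hpow (b : K)
        rw [← hc]
        exact E.algebraMap_mem c
      have heraseS : ∀ f ∈ t, (f.erase b).support ⊆ s' := by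
        intro f hf
        rw [Finsupp.support_erase]
        intro a ha
        rcases Finset.mem_erase.mp ha with ⟨hab, haf⟩
        rcases Finset.mem_insert.mp (ht f hf haf) with h | h
        · exact absurd h hab
        · exact h
      have heraseE : ∀ f ∈ t, pMono p B (f.erase b) ∈ E := by
        intro f hf
        apply pMono_mem_adjoin
        intro a ha
        have has' := heraseS f hf ha
        refine ⟨a.2, ?_⟩
        intro hab
        have : a = b := Subtype.ext hab
        exact hbs (this ▸ has')
      set c : Fin p → K := fun j => ∑ f ∈ t.filter (fun f => f b = j), g f • pMono p B (f.erase b)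
        with hc
      have hcE : ∀ j, c j ∈ E := by
        intro j
        apply Subfield.sum_mem
        intro f hf
        rw [Algebra.smul_def]
        exact E.mul_mem (E.algebraMap_mem _) (heraseE f (Finset.mem_filter.mp hf).1)
      have hsum2 : ∑ j : Fin p, c j * (b : K) ^ (j : ℕ) = 0 := by
        rw [← hsum, ← Finset.sum_fiberwise t (fun f => f b) (fun f => g f • pMono p B f)]
        apply Finset.sum_congr rfl
        intro j _
        rw [hc, Finset.sum_mul]
        apply Finset.sum_congr rfl
        intro f hf
        rw [smul_mul_assoc, ← (Finset.mem_filter.mp hf).2, ← pMono_erase]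
      have hczero : ∀ j : Fin p, c j = 0 := by
        intro j
        have hli := pb_powers_li (F := F) hbpE hbE
        have := Fintype.linearIndependent_iff.mp hli (fun j => (⟨c j, hcE j⟩ : E)) ?_ j
        · exact congrArg Subtype.val this
        · rw [← hsum2]
          apply Finset.sum_congr rfl
          intro i _
          rw [Algebra.smul_def]
          rfl
      -- now apply ih on each fiber
      have hfiber : ∀ j : Fin p, ∀ f ∈ t.filter (fun f => f b = j), g f = 0 := by
        intro j f hf
        have hinj : ∀ f1 ∈ t.filter (fun f => f b = j), ∀ f2 ∈ t.filter (fun f => f b = j),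
            f1.erase b = f2.erase b → f1 = f2 := by
          intro f1 hf1 f2 hf2 he
          have h1 := (Finset.mem_filter.mp hf1).2
          have h2 := (Finset.mem_filter.mp hf2).2
          rw [← Finsupp.erase_add_single b f1, ← Finsupp.erase_add_single b f2, he, h1, h2]
        set g' : (↥B →₀ Fin p) → F := fun f' => g (f' + Finsupp.single b j) with hg'
        have hgg : ∀ f' ∈ t.filter (fun f => f b = j), g' (f'.erase b) = g f' := by
          intro f' hf'
          rw [hg']
          simp only
          rw [← (Finset.mem_filter.mp hf').2, Finsupp.erase_add_single]
        have hsum' : ∑ f' ∈ (t.filter (fun f => f b = j)).image (fun f => f.erase b),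
            g' f' • pMono p B f' = 0 := by
          rw [Finset.sum_image hinj]
          rw [← hczero j, hc]
          apply Finset.sum_congr rfl
          intro f' hf'
          rw [hgg f' hf']
        have hsupp' : ∀ f' ∈ (t.filter (fun f => f b = j)).image (fun f => f.erase b),
            f'.support ⊆ s' := by
          intro f' hf'
          rcases Finset.mem_image.mp hf' with ⟨f'', hf'', rfl⟩
          exact heraseS f'' (Finset.mem_filter.mp hf'').1
        have := ih _ hsupp' g' hsum' (f.erase b)
          (Finset.mem_image.mpr ⟨f, hf, rfl⟩)
        rw [hgg f hf] at this
        exact this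
      exact hfiber (f₀ b) f₀ (Finset.mem_filter.mpr ⟨hf₀, rfl⟩)
  rw [linearIndependent_iff']
  intro s g hsum f hf
  exact claim (s.sup fun f => f.support) s
    (fun f hf => Finset.le_sup (f := fun f => f.support) hf) g hsum f hf

end PB4

section PB5
variable {p : ℕ} [Fact p.Prime] {F K : Type*} [Field F] [Field K] [Algebra F K] [CharP K p]

theorem pMono_mul_mem (B : Set K) (hpow : ∀ x : K, x ^ p ∈ (algebraMap F K).range)
    (bx : ↥B) (f : ↥B →₀ Fin p) :
    (bx : K) * pMono p B f ∈ Submodule.span F (Set.range (pMono p B)) := by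
  classical
  have h1 : (bx : K) * pMono p B f = pMono p B (f.erase bx) * (bx : K) ^ ((f bx : ℕ) + 1) := by
    rw [pMono_erase B bx f, pow_succ]
    ring
  rcases Nat.lt_or_ge ((f bx : ℕ) + 1) p with h | h
  · set f' : ↥B →₀ Fin p := f.erase bx + Finsupp.single bx ⟨(f bx : ℕ) + 1, h⟩ with hf'
    have hfb' : f' bx = ⟨(f bx : ℕ) + 1, h⟩ := by
      rw [hf', Finsupp.add_apply, Finsupp.erase_same, Finsupp.single_eq_same, zero_add]
    have herase' : f'.erase bx = f.erase bx := by
      rw [hf', Finsupp.erase_add, Finsupp.erase_idem, Finsupp.erase_single, add_zero]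
    have : (bx : K) * pMono p B f = pMono p B f' := by
      rw [h1, pMono_erase B bx f', hfb', herase']
    rw [this]
    exact Submodule.subset_span ⟨f', rfl⟩
  · have hfb : (f bx : ℕ) + 1 = p := by
      have := (f bx).isLt
      omega
    obtain ⟨c, hc⟩ := hpow (bx : K)
    have : (bx : K) * pMono p B f = c • pMono p B (f.erase bx) := by
      rw [h1, hfb, ← hc, Algebra.smul_def]
      ring
    rw [this]
    exact Submodule.smul_mem _ c (Submodule.subset_span ⟨_, rfl⟩)

theorem pMono_span (B : Set K) (hpow : ∀ x : K, x ^ p ∈ (algebraMap F K).range)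
    (hgen : adjoin F B = ⊤) :
    Submodule.span F (Set.range (pMono p B)) = ⊤ := by
  classical
  have halg : ∀ x ∈ B, IsAlgebraic F x := by
    intro x _
    obtain ⟨c, hc⟩ := hpow x
    exact IsIntegral.isAlgebraic ⟨X ^ p - C c,
      monic_X_pow_sub_C _ (Fact.out : p.Prime).ne_zero, by simp [eval₂_sub, eval₂_pow, hc]⟩
  have htop : Algebra.adjoin F B = ⊤ := by
    have h := adjoin_toSubalgebra_of_isAlgebraic halg
    rw [hgen, top_toSubalgebra] at h
    exact h.symm
  have hspan : Submodule.span F ((Submonoid.closure B : Submonoid K) : Set K) = ⊤ := by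
    have h := Algebra.adjoin_eq_span (R := F) (s := B)
    rw [htop] at h
    exact h.symm
  have claim2 : ∀ x ∈ Submonoid.closure B,
      ∀ z ∈ Submodule.span F (Set.range (pMono p B)),
        x * z ∈ Submodule.span F (Set.range (pMono p B)) := by
    intro x hx
    induction hx using Submonoid.closure_induction with
    | mem x h =>
      intro z hz
      induction hz using Submodule.span_induction with
      | mem w hw =>
        obtain ⟨f, rfl⟩ := hw
        exact pMono_mul_mem B hpow ⟨x, h⟩ f
      | zero => simpa using Submodule.zero_mem _
      | add a b ha hb iha ihb =>
        rw [mul_add]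
        exact Submodule.add_mem _ iha ihb
      | smul c a ha iha =>
        rw [mul_smul_comm]
        exact Submodule.smul_mem _ c iha
    | one =>
      intro z hz
      simpa using hz
    | mul x y hx hy ihx ihy =>
      intro z hz
      rw [mul_assoc]
      exact ihx _ (ihy z hz)
  refine eq_top_iff.mpr ?_
  rw [← hspan]
  apply Submodule.span_le.mpr
  intro x hx
  have h1 : (1 : K) ∈ Submodule.span F (Set.range (pMono p B)) :=
    Submodule.subset_span ⟨0, pMono_zero B⟩
  simpa using claim2 x hx 1 h1

end PB5

section PB6
variable {p : ℕ} [Fact p.Prime] {F K : Type*} [Field F] [Field K] [Algebra F K] [CharP K p]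

theorem pb_rank (B : Set K) (hpow : ∀ x : K, x ^ p ∈ (algebraMap F K).range)
    (hgen : adjoin F B = ⊤) (hfree : ∀ x ∈ B, x ∉ adjoin F (B \ {x})) :
    Cardinal.mk (↥B →₀ Fin p) = Module.rank F K :=
  (Module.Basis.mk (pMono_li B hpow hfree) (le_of_eq (pMono_span B hpow hgen).symm)).mk_eq_rank''

end PB6

theorem card_eq_of_mk_finsupp_fin {p : ℕ} [NeZero p] (hp : 2 ≤ p) {α β : Type u}
    (h : Cardinal.mk (α →₀ Fin p) = Cardinal.mk (β →₀ Fin p)) :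
    Cardinal.mk α = Cardinal.mk β := by
  haveI : Nontrivial (Fin p) := Fin.nontrivial_iff_two_le.mpr hp
  have hfinp : Cardinal.mk (Fin p) = (p : Cardinal) := Cardinal.mk_fin p
  rcases finite_or_infinite α with hα | hα
  · rcases finite_or_infinite β with hβ | hβ
    · haveI := Fintype.ofFinite α
      haveI := Fintype.ofFinite β
      simp only [Cardinal.mk_finsupp_lift_of_fintype, Cardinal.mk_fin, Cardinal.lift_natCast] at h
      have h' : (p : Cardinal) ^ (Fintype.card α : ℕ) = (p : Cardinal) ^ (Fintype.card β : ℕ) := h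
      rw [← Nat.cast_pow, ← Nat.cast_pow, Nat.cast_inj] at h'
      have := Nat.pow_right_injective hp h'
      simp [Cardinal.mk_fintype, this]
    · exfalso
      haveI := Fintype.ofFinite α
      simp only [Cardinal.mk_finsupp_lift_of_fintype, Cardinal.mk_finsupp_lift_of_infinite,
        Cardinal.mk_fin, Cardinal.lift_natCast, Cardinal.lift_id'] at h
      have hlt : (p : Cardinal) ^ (Fintype.card α : ℕ) < Cardinal.aleph0 := by
        rw [← Nat.cast_pow]
        exact Cardinal.nat_lt_aleph0 _
      rw [h] at hlt
      have : Cardinal.aleph0 ≤ max (Cardinal.lift.{0} (Cardinal.mk β)) ((p : Cardinal)) := by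
        refine le_max_of_le_left ?_
        rw [Cardinal.lift_uzero]
        exact Cardinal.infinite_iff.mp hβ
      exact absurd hlt (not_lt.mpr (le_trans this (le_of_eq (by simp))))
  · rcases finite_or_infinite β with hβ | hβ
    · exfalso
      haveI := Fintype.ofFinite β
      simp only [Cardinal.mk_finsupp_lift_of_fintype, Cardinal.mk_finsupp_lift_of_infinite,
        Cardinal.mk_fin, Cardinal.lift_natCast, Cardinal.lift_id'] at h
      have hlt : (p : Cardinal) ^ (Fintype.card β : ℕ) < Cardinal.aleph0 := by
        rw [← Nat.cast_pow]
        exact Cardinal.nat_lt_aleph0 _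
      rw [← h] at hlt
      have : Cardinal.aleph0 ≤ max (Cardinal.lift.{0} (Cardinal.mk α)) ((p : Cardinal)) := by
        refine le_max_of_le_left ?_
        rw [Cardinal.lift_uzero]
        exact Cardinal.infinite_iff.mp hα
      exact absurd hlt (not_lt.mpr (le_trans this (le_of_eq (by simp))))
    · simp only [Cardinal.mk_finsupp_lift_of_infinite, Cardinal.mk_fin, Cardinal.lift_natCast,
        Cardinal.lift_uzero] at h
      have hα' : (p : Cardinal) ≤ Cardinal.mk α :=
        le_trans (le_of_lt (Cardinal.nat_lt_aleph0 p)) (Cardinal.infinite_iff.mp hα)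
      have hβ' : (p : Cardinal) ≤ Cardinal.mk β :=
        le_trans (le_of_lt (Cardinal.nat_lt_aleph0 p)) (Cardinal.infinite_iff.mp hβ)
      rwa [max_eq_left hα', max_eq_left hβ'] at h

end AuxPB

/-- Any two `r`-bases of `K/k` have the same cardinality. -/
theorem rBasis_card_eq
    (p : ℕ) [Fact p.Prime] (k K : Type*) [Field k] [Field K] [Algebra k K] [CharP k p]
    (B₁ B₂ : Set K) (h₁ : RBasis k K p B₁) (h₂ : RBasis k K p B₂) :
    Cardinal.mk B₁ = Cardinal.mk B₂ := by
  haveI : CharP K p := charP_of_injective_algebraMap (algebraMap k K).injective p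
  have hpow : ∀ x : K, x ^ p ∈ (algebraMap ↥(pClosure k K p) K).range := by
    intro x
    have hx : x ^ p ∈ pClosure k K p :=
      subset_adjoin k {x : K | ∃ y : K, y ^ p = x} ⟨x, rfl⟩
    exact ⟨⟨x ^ p, hx⟩, rfl⟩
  have r1 := pb_rank (F := ↥(pClosure k K p)) B₁ hpow h₁.1 h₁.2
  have r2 := pb_rank (F := ↥(pClosure k K p)) B₂ hpow h₂.1 h₂.2
  exact card_eq_of_mk_finsupp_fin (Fact.out : p.Prime).two_le (r1.trans r2.symm)
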